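/- Let β: [0,1] → ℝ be C¹ with β(t) = ∑_{k≥1} β_k t^k, β_k ≥ 0, ∑ k β_k < ∞, and β twice differentiable at t* where t* = inf{t ≥ 0 : β'(t) + log(1-t) < 0} ∈ [0,1). Then (1 - t*) · β''(t*) ≤ 1. -/

import Mathlib

open Real Set Filter Topology

/-- If `β(t) = ∑_{k≥1} β_k t^k` with `β_k ≥ 0`, `∑ k β_k < ∞`, `β` is `C¹` on `[0,1]`,
and `t* = inf {t ≥ 0 : β'(t) + log(1-t) < 0} ∈ [0,1)`, and `β` is twice differentiable
at `t*`, then `(1 - t*) β''(t*) ≤ 1`. -/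
theorem essential_edges_gamma_le_one
    (βk : ℕ → ℝ) (hnn : ∀ k, 0 ≤ βk k)
    (hsum : Summable fun k : ℕ => (k : ℝ) * βk k)
    (β : ℝ → ℝ) (hβ : β = fun t => ∑' k : ℕ, βk k * t ^ k)
    (hC1 : ContDiffOn ℝ 1 β (Icc 0 1))
    (tstar : ℝ)
    (htstar : tstar = sInf {t : ℝ | 0 ≤ t ∧ deriv β t + Real.log (1 - t) < 0})
    (hts : tstar ∈ Ico (0 : ℝ) 1)
    (h2 : DifferentiableAt ℝ (deriv β) tstar) :
    (1 - tstar) * deriv (deriv β) tstar ≤ 1 := by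
  obtain ⟨hts0, hts1⟩ := hts
  set S : Set ℝ := {t : ℝ | 0 ≤ t ∧ deriv β t + Real.log (1 - t) < 0} with hS
  set f : ℝ → ℝ := fun t => deriv β t + Real.log (1 - t) with hf
  -- derivative of the power series on (-1,1)
  have hderiv : ∀ t ∈ Ioo (-1 : ℝ) 1,
      HasDerivAt β (∑' k : ℕ, (k : ℝ) * βk k * t ^ (k - 1)) t := by
    intro t ht
    have h := hasDerivAt_tsum_of_isPreconnected hsum isOpen_Ioo
      (convex_Ioo (-1 : ℝ) 1).isPreconnected
      (g := fun k t => βk k * t ^ k) (g' := fun k t => (k : ℝ) * βk k * t ^ (k - 1))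
      (fun n x hx => by
        have h := (hasDerivAt_pow n x).const_mul (βk n)
        rw [← mul_assoc, mul_comm (βk n)] at h; exact h)
      (fun n x hx => by
        have hx1 : |x| ≤ 1 := le_of_lt (abs_lt.mpr ⟨hx.1, hx.2⟩)
        have hp : |x| ^ (n - 1) ≤ 1 := pow_le_one₀ (abs_nonneg x) hx1
        have hb : (0 : ℝ) ≤ (n : ℝ) * βk n := mul_nonneg (Nat.cast_nonneg _) (hnn n)
        rw [Real.norm_eq_abs, abs_mul, abs_mul, abs_pow,
          abs_of_nonneg (by positivity : (0:ℝ) ≤ (n:ℝ)), abs_of_nonneg (hnn n)]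
        nlinarith [pow_nonneg (abs_nonneg x) (n-1)])
      (by norm_num : (0 : ℝ) ∈ Ioo (-1 : ℝ) 1)
      (by
        apply summable_of_ne_finset_zero (s := {0})
        intro n hn
        simp only [Finset.mem_singleton] at hn
        simp [zero_pow hn])
      ht
    rw [hβ]; exact h
  set C : ℝ := ∑' k : ℕ, (k : ℝ) * βk k with hC
  have hC0 : 0 ≤ C := tsum_nonneg fun k => mul_nonneg (Nat.cast_nonneg _) (hnn k)
  -- the set S is nonempty
  have hSne : S.Nonempty := by
    refine ⟨1 - Real.exp (-(C + 1)), ?_, ?_⟩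
    · have : Real.exp (-(C + 1)) < 1 := Real.exp_lt_one_iff.mpr (by linarith)
      linarith
    · have he : (0 : ℝ) < Real.exp (-(C + 1)) := Real.exp_pos _
      have he1 : Real.exp (-(C + 1)) < 1 := Real.exp_lt_one_iff.mpr (by linarith)
      have hmem : (1 - Real.exp (-(C + 1))) ∈ Ioo (-1 : ℝ) 1 := ⟨by linarith, by linarith⟩
      have hd := (hderiv _ hmem).deriv
      rw [hd]
      have hsum' : Summable fun k : ℕ => (k : ℝ) * βk k * (1 - Real.exp (-(C + 1))) ^ (k - 1) := by
        apply Summable.of_nonneg_of_le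
          (fun k => mul_nonneg (mul_nonneg (Nat.cast_nonneg _) (hnn k))
            (pow_nonneg (by linarith) _)) _ hsum
        intro k
        have : (1 - Real.exp (-(C + 1))) ^ (k - 1) ≤ 1 :=
          pow_le_one₀ (by linarith) (by linarith)
        nlinarith [mul_nonneg (Nat.cast_nonneg (α := ℝ) k) (hnn k)]
      have hle : (∑' k : ℕ, (k : ℝ) * βk k * (1 - Real.exp (-(C + 1))) ^ (k - 1)) ≤ C := by
        refine Summable.tsum_le_tsum ?_ hsum' hsum
        intro k
        have h1 : (1 - Real.exp (-(C + 1))) ^ (k - 1) ≤ 1 :=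
          pow_le_one₀ (by linarith) (by linarith)
        nlinarith [mul_nonneg (Nat.cast_nonneg (α := ℝ) k) (hnn k)]
      have hlog : Real.log (1 - (1 - Real.exp (-(C + 1)))) = -(C + 1) := by
        rw [show (1 : ℝ) - (1 - Real.exp (-(C + 1))) = Real.exp (-(C + 1)) by ring,
          Real.log_exp]
      rw [hlog]; linarith
  have hbdd : BddBelow S := ⟨0, fun s hs => hs.1⟩
  have hle : ∀ s ∈ S, tstar ≤ s := fun s hs => htstar ▸ csInf_le hbdd hs
  have hfpos : ∀ x, 0 ≤ x → x < tstar → 0 ≤ f x := by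
    intro x hx0 hxt
    by_contra h
    push_neg at h
    exact absurd (hle x ⟨hx0, h⟩) (not_le.mpr hxt)
  have h1t : (0 : ℝ) < 1 - tstar := by linarith
  -- continuity of f at tstar
  have hlogd : HasDerivAt (fun t : ℝ => Real.log (1 - t)) ((1 - tstar)⁻¹ * (-1)) tstar :=
    (Real.hasDerivAt_log (by linarith)).comp tstar ((hasDerivAt_id tstar).const_sub 1)
  have hfd : HasDerivAt f (deriv (deriv β) tstar + (1 - tstar)⁻¹ * (-1)) tstar :=
    h2.hasDerivAt.add hlogd
  -- f tstar ≥ 0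
  have hftstar : 0 ≤ f tstar := by
    rcases eq_or_lt_of_le hts0 with h0 | h0
    · have hmem : tstar ∈ Ioo (-1 : ℝ) 1 := ⟨by linarith, hts1⟩
      have hd := (hderiv tstar hmem).deriv
      simp only [hf]
      rw [hd, ← h0]
      simp only [Real.log_one, sub_zero, add_zero]
      exact tsum_nonneg fun k =>
        mul_nonneg (mul_nonneg (Nat.cast_nonneg _) (hnn k)) (pow_nonneg le_rfl _)
    · have hcont : ContinuousAt f tstar := hfd.continuousAt
      have ht : Tendsto f (𝓝[<] tstar) (𝓝 (f tstar)) :=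
        hcont.continuousWithinAt (s := Iio tstar)
      refine ge_of_tendsto ht ?_
      have hmem : Ioo 0 tstar ∈ 𝓝[<] tstar := Ioo_mem_nhdsLT_of_mem ⟨h0, le_refl _⟩
      filter_upwards [hmem] with x hx
      exact hfpos x hx.1.le hx.2
  -- tstar is in the closure of S \ {tstar}
  have hclosure : tstar ∈ closure (S \ {tstar}) := by
    rw [Metric.mem_closure_iff]
    intro ε hε
    have hlt : sInf S < tstar + ε := by rw [← htstar]; linarith
    obtain ⟨s, hsS, hs⟩ := (csInf_lt_iff hbdd hSne).mp hlt
    have hst : tstar ≤ s := hle s hsS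
    have hne : s ≠ tstar := by
      intro h; rw [h] at hsS; exact absurd hsS.2 (not_lt.mpr hftstar)
    refine ⟨s, ⟨hsS, hne⟩, ?_⟩
    rw [Real.dist_eq, abs_of_nonpos (by linarith)]
    linarith
  have hneb : (𝓝[S \ {tstar}] tstar).NeBot := mem_closure_iff_nhdsWithin_neBot.mp hclosure
  have hslope := hasDerivAt_iff_tendsto_slope.mp hfd
  have hmono : 𝓝[S \ {tstar}] tstar ≤ 𝓝[{tstar}ᶜ] tstar :=
    nhdsWithin_mono _ (fun x hx => hx.2)
  have hle0 : deriv (deriv β) tstar + (1 - tstar)⁻¹ * (-1) ≤ 0 := by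
    refine le_of_tendsto (hslope.mono_left hmono) ?_
    filter_upwards [self_mem_nhdsWithin] with s hs
    have hsS : s ∈ S := hs.1
    have hst : tstar < s := lt_of_le_of_ne (hle s hsS) (Ne.symm hs.2)
    rw [slope_def_field]
    apply div_nonpos_of_nonpos_of_nonneg
    · have : f s < 0 := hsS.2
      simp only [hf] at this hftstar ⊢
      linarith
    · linarith
  have hD : deriv (deriv β) tstar ≤ (1 - tstar)⁻¹ := by
    have : (1 - tstar)⁻¹ * (-1) = -(1 - tstar)⁻¹ := by ring
    rw [this] at hle0; linarith
  calc (1 - tstar) * deriv (deriv β) tstar ≤ (1 - tstar) * (1 - tstar)⁻¹ :=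
        mul_le_mul_of_nonneg_left hD h1t.le
    _ = 1 := mul_inv_cancel₀ (ne_of_gt h1t)
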